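/- Let I ⊆ R be a V-submodule, regarded as a V-submodule of the unitization R⁺ = V ⊕ R. Then for every m ≥ 1, the m-th power of the V-submodule I + V·(π1) of R⁺ equals the internal direct sum (Σ_{j=1}^m π^{m−j} I^j) ⊕ V·(π^m 1); in particular (I + V·π1)^m ∩ R = Σ_{j=1}^m π^{m−j} I^j. -/

import Mathlib

/-!
Statement 6.  `V` is a commutative ring, `π ∈ V`, `R` a non-unital `V`-algebra and
`R⁺ = Unitization V R = V ⊕ R` its unitization.  For a `V`-submodule `I ⊆ R`, regarded
inside `R⁺`, and every `m ≥ 1`, the `m`-th power of `I + V·(π1)` equals the internal direct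
sum `(Σ_{j=1}^m π^{m−j} I^j) ⊕ V·(π^m 1)`, and `(I + V·π1)^m ∩ R = Σ_{j=1}^m π^{m−j} I^j`.
-/

open scoped Pointwise

section helpers
variable {V : Type} [CommRing V] {A : Type} [Ring A] [Algebra V A]

variable {V : Type} [CommRing V] {A : Type} [Ring A] [Algebra V A]

lemma span_smul_one_mul (c : V) (M : Submodule V A) :
    Submodule.span V {c • (1 : A)} * M = c • M := by
  apply le_antisymm
  · rw [Submodule.mul_le]
    intro x hx m hm
    obtain ⟨t, rfl⟩ := Submodule.mem_span_singleton.1 hx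
    have : t • c • (1 : A) * m = t • (c • m) := by
      rw [smul_mul_assoc, smul_mul_assoc, one_mul]
    rw [this]
    exact Submodule.smul_mem _ t (Submodule.smul_mem_pointwise_smul m c M hm)
  · intro x hx
    rw [← SetLike.mem_coe, Submodule.coe_pointwise_smul] at hx
    obtain ⟨m, hm, rfl⟩ := hx
    show c • m ∈ _
    have : c • m = (c • (1 : A)) * m := by rw [smul_mul_assoc, one_mul]
    rw [this]
    exact Submodule.mul_mem_mul (Submodule.mem_span_singleton_self _) hm

lemma mul_span_smul_one (c : V) (M : Submodule V A) :
    M * Submodule.span V {c • (1 : A)} = c • M := by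
  apply le_antisymm
  · rw [Submodule.mul_le]
    intro m hm x hx
    obtain ⟨t, rfl⟩ := Submodule.mem_span_singleton.1 hx
    have : m * t • c • (1 : A) = t • (c • m) := by
      rw [mul_smul_comm, mul_smul_comm, mul_one]
    rw [this]
    exact Submodule.smul_mem _ t (Submodule.smul_mem_pointwise_smul m c M hm)
  · intro x hx
    rw [← SetLike.mem_coe, Submodule.coe_pointwise_smul] at hx
    obtain ⟨m, hm, rfl⟩ := hx
    show c • m ∈ _
    have : c • m = m * (c • (1 : A)) := by rw [mul_smul_comm, mul_one]
    rw [this]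
    exact Submodule.mul_mem_mul hm (Submodule.mem_span_singleton_self _)

lemma st6_smul_mul (c : V) (M N : Submodule V A) : (c • M) * N = c • (M * N) := by
  rw [← span_smul_one_mul, ← span_smul_one_mul, mul_assoc]

lemma st6_mul_smul (c : V) (M N : Submodule V A) : M * (c • N) = c • (M * N) := by
  rw [← mul_span_smul_one c N, ← mul_assoc, mul_span_smul_one]

lemma span_one_mul_span_one (a b : V) :
    Submodule.span V {a • (1 : A)} * Submodule.span V {b • (1 : A)} =
      Submodule.span V {(a * b) • (1 : A)} := by
  rw [span_smul_one_mul, Submodule.smul_span, Set.smul_set_singleton, smul_smul]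

lemma sum_mul' {ι : Type} (s : Finset ι) (f : ι → Submodule V A) (M : Submodule V A) :
    (∑ j ∈ s, f j) * M = ∑ j ∈ s, f j * M := by
  induction s using Finset.cons_induction with
  | empty => simp [Submodule.zero_eq_bot, Submodule.bot_mul]
  | cons a s ha ih =>
      rw [Finset.sum_cons, Finset.sum_cons]
      show (f a ⊔ ∑ j ∈ s, f j) * M = f a * M ⊔ ∑ j ∈ s, f j * M
      rw [Submodule.sup_mul, ih]

lemma mul_sum' {ι : Type} (s : Finset ι) (f : ι → Submodule V A) (M : Submodule V A) :
    M * (∑ j ∈ s, f j) = ∑ j ∈ s, M * f j := by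
  induction s using Finset.cons_induction with
  | empty => simp [Submodule.zero_eq_bot, Submodule.mul_bot]
  | cons a s ha ih =>
      rw [Finset.sum_cons, Finset.sum_cons]
      show M * (f a ⊔ ∑ j ∈ s, f j) = M * f a ⊔ ∑ j ∈ s, M * f j
      rw [Submodule.mul_sup, ih]

lemma sum_le' {ι : Type} (s : Finset ι) (f : ι → Submodule V A) (N : Submodule V A)
    (h : ∀ i ∈ s, f i ≤ N) : ∑ j ∈ s, f j ≤ N := by
  induction s using Finset.cons_induction with
  | empty => simp [Submodule.zero_eq_bot]
  | cons a s ha ih =>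
      rw [Finset.sum_cons]
      show f a ⊔ ∑ j ∈ s, f j ≤ N
      exact sup_le (h a (Finset.mem_cons_self a s)) (ih fun i hi => h i (Finset.mem_cons_of_mem hi))

end helpers

noncomputable section

variable (V : Type) [CommRing V] (π : V)
variable (R : Type) [NonUnitalRing R] [Module V R] [SMulCommClass V R R] [IsScalarTower V R R]
variable (I : Submodule V R)

/-- `I` regarded as a `V`-submodule of the unitization `R⁺ = V ⊕ R`. -/
def subInr : Submodule V (Unitization V R) := Submodule.map (Unitization.inrHom V V R) I

lemma st6_key (m : ℕ) (hm : 1 ≤ m) :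
    (subInr V R I ⊔ Submodule.span V {π • (1 : Unitization V R)}) ^ m =
      (∑ j ∈ Finset.Icc 1 m, (π ^ (m - j)) • (subInr V R I) ^ j) ⊔
        Submodule.span V {π ^ m • (1 : Unitization V R)} := by
  induction m, hm using Nat.le_induction with
  | base =>
    rw [Submodule.pow_one, Finset.Icc_self, Finset.sum_singleton, Nat.sub_self, pow_zero,
      one_smul, Submodule.pow_one, pow_one]
  | succ m hm ih =>
    set A := subInr V R I with hA
    rw [Submodule.pow_succ, ih, Submodule.sup_mul, Submodule.mul_sup, Submodule.mul_sup,
      sum_mul', sum_mul', span_smul_one_mul, span_one_mul_span_one, ← pow_succ]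
    simp only [st6_smul_mul, mul_span_smul_one, ← pow_succ, smul_smul, ← pow_succ']
    -- now massage the two sums
    have h1 : ∀ j ∈ Finset.Icc 1 m, π ^ (m - j + 1) • A ^ j = π ^ (m + 1 - j) • A ^ j := by
      intro j hj
      obtain ⟨h1j, hjm⟩ := Finset.mem_Icc.1 hj
      congr 2
      omega
    rw [Finset.sum_congr rfl h1]
    apply le_antisymm
    · apply sup_le (sup_le ?_ ?_) (sup_le ?_ le_sup_right)
      · refine le_trans (sum_le' _ _ _ ?_) le_sup_left
        intro j hj
        obtain ⟨h1j, hjm⟩ := Finset.mem_Icc.1 hj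
        have : (m : ℕ) - j = m + 1 - (j + 1) := by omega
        rw [this]
        exact Finset.single_le_sum (f := fun k => π ^ (m + 1 - k) • A ^ k)
          (fun i _ => zero_le) (Finset.mem_Icc.2 ⟨by omega, by omega⟩)
      · refine le_trans (sum_le' _ _ _ ?_) le_sup_left
        intro j hj
        obtain ⟨h1j, hjm⟩ := Finset.mem_Icc.1 hj
        exact Finset.single_le_sum (f := fun k => π ^ (m + 1 - k) • A ^ k)
          (fun i _ => zero_le) (Finset.mem_Icc.2 ⟨h1j, by omega⟩)
      · refine le_trans ?_ le_sup_left
        have : π ^ m • A = π ^ (m + 1 - 1) • A ^ 1 := by rw [pow_one]; congr 1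
        rw [this]
        exact Finset.single_le_sum (f := fun k => π ^ (m + 1 - k) • A ^ k)
          (fun i _ => zero_le) (Finset.mem_Icc.2 ⟨le_refl 1, by omega⟩)
    · apply sup_le ?_ (le_trans le_sup_right le_sup_right)
      apply sum_le'
      intro j hj
      obtain ⟨h1j, hjm1⟩ := Finset.mem_Icc.1 hj
      by_cases hj' : j ≤ m
      · refine le_trans ?_ (le_trans le_sup_right le_sup_left)
        exact Finset.single_le_sum (f := fun k => π ^ (m + 1 - k) • A ^ k)
          (fun i _ => zero_le) (Finset.mem_Icc.2 ⟨h1j, hj'⟩)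
      · have hj2 : j = m + 1 := by omega
        subst hj2
        refine le_trans ?_ (le_trans le_sup_left le_sup_left)
        have : π ^ (m + 1 - (m + 1)) • A ^ (m + 1) = π ^ (m - m) • A ^ (m + 1) := by
          congr 2
          omega
        rw [this]
        exact Finset.single_le_sum (f := fun k => π ^ (m - k) • A ^ (k + 1))
          (fun i _ => zero_le) (Finset.mem_Icc.2 ⟨hm, le_refl m⟩)

lemma st6_subInr_le : subInr V R I ≤ LinearMap.range (Unitization.inrHom V V R) := by
  rintro x ⟨y, hy, rfl⟩
  exact ⟨y, rfl⟩

lemma st6_range_mul :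
    LinearMap.range (Unitization.inrHom V V R) * LinearMap.range (Unitization.inrHom V V R) ≤
      LinearMap.range (Unitization.inrHom V V R) := by
  rw [Submodule.mul_le]
  rintro x ⟨a, rfl⟩ y ⟨b, rfl⟩
  exact ⟨a * b, (Unitization.inr_mul V a b)⟩

lemma st6_pow_le (j : ℕ) (hj : 1 ≤ j) :
    subInr V R I ^ j ≤ LinearMap.range (Unitization.inrHom V V R) := by
  induction j, hj using Nat.le_induction with
  | base => rw [Submodule.pow_one]; exact st6_subInr_le V R I
  | succ j hj ih =>
      rw [Submodule.pow_succ]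
      exact le_trans (mul_le_mul' ih (st6_subInr_le V R I)) (st6_range_mul V R)

lemma st6_sum_le_range (m : ℕ) :
    (∑ j ∈ Finset.Icc 1 m, (π ^ (m - j)) • (subInr V R I) ^ j) ≤
      LinearMap.range (Unitization.inrHom V V R) := by
  apply sum_le'
  intro j hj
  obtain ⟨h1j, _⟩ := Finset.mem_Icc.1 hj
  exact le_trans (Submodule.smul_le_self_of_tower _ _) (st6_pow_le V R I j h1j)

lemma st6_range_inf_span (c : V) :
    LinearMap.range (Unitization.inrHom V V R) ⊓
      Submodule.span V {c • (1 : Unitization V R)} = ⊥ := by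
  rw [eq_bot_iff]
  rintro x ⟨hx1, hx2⟩
  obtain ⟨r, rfl⟩ := hx1
  obtain ⟨t, ht⟩ := Submodule.mem_span_singleton.1 hx2
  have hr : r = 0 := by
    have := congrArg (fun x : Unitization V R => x.snd) ht
    simpa using this.symm
  simp [hr, Submodule.mem_bot]

/-- For every `m ≥ 1`:
`(I + V·π1)^m = (Σ_{j=1}^m π^{m−j} I^j) ⊔ V·(π^m 1)`, the two summands intersect trivially
(the sum is an internal direct sum), and `(I + V·π1)^m ∩ R = Σ_{j=1}^m π^{m−j} I^j`. -/
theorem pow_sup_span_pi_one (m : ℕ) (hm : 1 ≤ m) :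
    ((subInr V R I ⊔ Submodule.span V {π • (1 : Unitization V R)}) ^ m =
        (∑ j ∈ Finset.Icc 1 m, (π ^ (m - j)) • (subInr V R I) ^ j) ⊔
          Submodule.span V {π ^ m • (1 : Unitization V R)}) ∧
      ((∑ j ∈ Finset.Icc 1 m, (π ^ (m - j)) • (subInr V R I) ^ j) ⊓
          Submodule.span V {π ^ m • (1 : Unitization V R)} = ⊥) ∧
      ((subInr V R I ⊔ Submodule.span V {π • (1 : Unitization V R)}) ^ m ⊓
          LinearMap.range (Unitization.inrHom V V R) =
        ∑ j ∈ Finset.Icc 1 m, (π ^ (m - j)) • (subInr V R I) ^ j) := by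
  refine ⟨st6_key V π R I m hm, ?_, ?_⟩
  · rw [eq_bot_iff]
    exact le_trans (inf_le_inf_right _ (st6_sum_le_range V π R I m))
      (le_of_eq (st6_range_inf_span V R (π ^ m)))
  · rw [st6_key V π R I m hm,
      sup_inf_assoc_of_le _ (st6_sum_le_range V π R I m), inf_comm,
      st6_range_inf_span V R (π ^ m), sup_bot_eq]

end
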